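/- (Case n = 1 of the paper's theorem that add(p) is a torsion class for a simple projective module p.) Let k be a field, Λ a finite-dimensional k-algebra, and p a simple projective finitely generated left Λ-module. Then add(p) is a torsion class in the category of finitely generated Λ-modules: for every finitely generated module m there is a short exact sequence 0 → u → m → v → 0 in which u is isomorphic to p^{⊕i} for some i ∈ ℕ and Hom_Λ(p, v) = 0. -/

import Mathlib

open Module LinearMap

/-- `Fin.cons` as a linear equivalence `p × (Fin i → p) ≃ₗ (Fin (i+1) → p)`. -/
private def consLinearEquiv (Λ : Type) [Ring Λ] (p : Type) [AddCommGroup p]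
    [Module Λ p] (i : ℕ) : (p × (Fin i → p)) ≃ₗ[Λ] (Fin (i + 1) → p) where
  toFun x := Fin.cons x.1 x.2
  map_add' a b := by
    funext j
    refine Fin.cases ?_ (fun jj => ?_) j <;> simp
  map_smul' c a := by
    funext j
    refine Fin.cases ?_ (fun jj => ?_) j <;> simp
  invFun y := (y 0, Fin.tail y)
  left_inv x := by
    refine Prod.ext ?_ ?_ <;> simp [Fin.tail]
  right_inv y := Fin.cons_self_tail y

private theorem projective_pi_fin {Λ : Type} [Ring Λ] {p : Type} [AddCommGroup p] [Module Λ p]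
    (hproj : Module.Projective Λ p) (i : ℕ) : Module.Projective Λ (Fin i → p) := by
  induction i with
  | zero =>
    haveI : Subsingleton (Fin 0 → p) := ⟨fun a b => funext fun j => j.elim0⟩
    exact Module.Projective.of_basis (Basis.empty (ι := Empty) (Fin 0 → p))
  | succ n ih =>
    haveI := hproj; haveI := ih
    exact Module.Projective.of_equiv (consLinearEquiv Λ p n)

private theorem aux {k : Type} [Field k] {Λ : Type} [Ring Λ] [Algebra k Λ]
    {p : Type} [AddCommGroup p] [Module Λ p]
    (hsimple : IsSimpleModule Λ p) (hproj : Module.Projective Λ p) :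
    ∀ (n : ℕ) (m : Type) [AddCommGroup m] [Module Λ m] [Module k m]
      [IsScalarTower k Λ m] [Module.Finite k m], Module.finrank k m ≤ n →
      ∃ (S : Submodule Λ m) (i : ℕ),
        Nonempty (S ≃ₗ[Λ] (Fin i → p)) ∧ ∀ f : p →ₗ[Λ] (m ⧸ S), f = 0 := by
  intro n
  induction n using Nat.strong_induction_on with
  | _ n IH =>
    intro m _ _ _ _ _ hrank
    by_cases h0 : ∀ f : p →ₗ[Λ] m, f = 0
    · haveI : Subsingleton (Fin 0 → p) := ⟨fun a b => funext fun j => j.elim0⟩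
      refine ⟨⊥, 0, ⟨LinearEquiv.ofSubsingleton _ _⟩, fun f => ?_⟩
      have e : (m ⧸ (⊥ : Submodule Λ m)) ≃ₗ[Λ] m := Submodule.quotEquivOfEqBot _ rfl
      have h1 : e.toLinearMap ∘ₗ f = 0 := h0 _
      ext x
      apply e.injective
      simpa using DFunLike.congr_fun h1 x
    · push_neg at h0
      obtain ⟨f, hf⟩ := h0
      have hker : LinearMap.ker f = ⊥ := by
        rcases eq_bot_or_eq_top (LinearMap.ker f) with h | h
        · exact h
        · exact absurd (LinearMap.ker_eq_top.mp h) hf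
      have hinj : Function.Injective f := LinearMap.ker_eq_bot.mp hker
      set N : Submodule Λ m := LinearMap.range f with hN
      have hNne : N ≠ ⊥ := by
        rw [hN, ne_eq, LinearMap.range_eq_bot]; exact hf
      have hNnt : Nontrivial N := Submodule.nontrivial_iff_ne_bot.mpr hNne
      haveI : Nontrivial m := by
        obtain ⟨⟨x, hx⟩, ⟨y, hy⟩, hxy⟩ := hNnt
        exact ⟨x, y, fun h => hxy (Subtype.ext h)⟩
      have hlt : Module.finrank k (m ⧸ N) < Module.finrank k m := by
        rw [N.finrank_quotient]
        haveI : Module.Finite k N :=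
          Module.Finite.of_injective ((N.subtype).restrictScalars k) N.injective_subtype
        have h1 : 0 < Module.finrank k N := Module.finrank_pos_iff.mpr hNnt
        have h2 : 0 < Module.finrank k m := Module.finrank_pos_iff.mpr ‹_›
        omega
      obtain ⟨S', i, ⟨e'⟩, hhom'⟩ :=
        IH (Module.finrank k (m ⧸ N)) (lt_of_lt_of_le hlt hrank) (m ⧸ N) le_rfl
      set S : Submodule Λ m := S'.comap N.mkQ with hS
      have hNS : N ≤ S := by
        intro x hx
        have hx0 : N.mkQ x = 0 := by
          simpa [Submodule.Quotient.mk_eq_zero] using hx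
        show N.mkQ x ∈ S'
        rw [hx0]; exact S'.zero_mem
      have hmap : S.map N.mkQ = S' :=
        Submodule.map_comap_eq_of_surjective N.mkQ_surjective S'
      let E : (m ⧸ S) ≃ₗ[Λ] ((m ⧸ N) ⧸ S') :=
        (Submodule.quotientQuotientEquivQuotient N S hNS).symm ≪≫ₗ
          (Submodule.quotEquivOfEq _ _ hmap)
      have hhom : ∀ g : p →ₗ[Λ] (m ⧸ S), g = 0 := by
        intro g
        have h1 : E.toLinearMap ∘ₗ g = 0 := hhom' _
        ext x
        apply E.injective
        simpa using DFunLike.congr_fun h1 x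
      let q : S →ₗ[Λ] S' := LinearMap.codRestrict S' (N.mkQ ∘ₗ S.subtype) (fun x => x.2)
      have hqsurj : Function.Surjective q := by
        rintro ⟨y, hy⟩
        obtain ⟨x, hx⟩ := N.mkQ_surjective y
        refine ⟨⟨x, ?_⟩, ?_⟩
        · show N.mkQ x ∈ S'
          rw [hx]; exact hy
        · exact Subtype.ext hx
      haveI hP : Module.Projective Λ (Fin i → p) := projective_pi_fin hproj i
      haveI : Module.Projective Λ S' := Module.Projective.of_equiv e'.symm
      obtain ⟨s, hs⟩ := Module.projective_lifting_property q LinearMap.id hqsurj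
      have hsec : ∀ y : S', q (s y) = y := fun y => by
        simpa using DFunLike.congr_fun hs y
      have hsinj : Function.Injective s := fun a b hab => by
        have := congrArg q hab
        rwa [hsec a, hsec b] at this
      have hcompl : IsCompl (LinearMap.range s) (LinearMap.ker q) := by
        constructor
        · rw [disjoint_iff]
          ext x
          simp only [Submodule.mem_inf, Submodule.mem_bot, LinearMap.mem_range,
            LinearMap.mem_ker]
          constructor
          · rintro ⟨⟨y, rfl⟩, hx⟩
            have hy : y = 0 := by rw [← hsec y, hx]
            simp [hy]
          · rintro rfl
            exact ⟨⟨0, map_zero s⟩, map_zero q⟩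
        · rw [codisjoint_iff]
          ext x
          simp only [Submodule.mem_top, iff_true, Submodule.mem_sup]
          refine ⟨s (q x), ⟨q x, rfl⟩, x - s (q x), ?_, by abel⟩
          simp [LinearMap.mem_ker, map_sub, hsec]
      have hkerq : LinearMap.ker q = Submodule.comap S.subtype N := by
        ext x
        simp only [LinearMap.mem_ker, Submodule.mem_comap]
        constructor
        · intro hx
          have h1 : N.mkQ x.1 = 0 := congrArg Subtype.val hx
          simpa [Submodule.Quotient.mk_eq_zero] using h1
        · intro hx
          apply Subtype.ext
          show N.mkQ x.1 = 0
          simpa [Submodule.Quotient.mk_eq_zero] using hx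
      let eker : (LinearMap.ker q) ≃ₗ[Λ] p :=
        (LinearEquiv.ofEq _ _ hkerq) ≪≫ₗ (Submodule.comapSubtypeEquivOfLe hNS) ≪≫ₗ
          (LinearEquiv.ofInjective f hinj).symm
      let erange : (LinearMap.range s) ≃ₗ[Λ] (Fin i → p) :=
        (LinearEquiv.ofInjective s hsinj).symm ≪≫ₗ e'
      let efinal : S ≃ₗ[Λ] (Fin (i + 1) → p) :=
        (Submodule.prodEquivOfIsCompl _ _ hcompl).symm ≪≫ₗ
          ((erange.prodCongr eker).trans
            ((LinearEquiv.prodComm Λ _ _).trans (consLinearEquiv Λ p i)))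
      exact ⟨S, i + 1, ⟨efinal⟩, hhom⟩

/-- Case `n = 1` of the theorem that `add p` is a torsion class for a simple
projective module `p`: every finitely generated module `m` has a submodule `S`
isomorphic to `p^{⊕ i}` for some `i` with `Hom(p, m/S) = 0`; equivalently there
is a short exact sequence `0 → u → m → v → 0` with `u ≅ p^{⊕ i}` and
`Hom(p, v) = 0`. -/
theorem add_simple_projective_torsion_class
    (k : Type) [Field k] (Λ : Type) [Ring Λ] [Algebra k Λ] [FiniteDimensional k Λ]
    (p : Type) [AddCommGroup p] [Module Λ p] [Module.Finite Λ p]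
    (hsimple : IsSimpleModule Λ p) (hproj : Module.Projective Λ p)
    (m : Type) [AddCommGroup m] [Module Λ m] [Module.Finite Λ m] :
    ∃ (S : Submodule Λ m) (i : ℕ),
      Nonempty (S ≃ₗ[Λ] (Fin i → p)) ∧
      ∀ f : p →ₗ[Λ] (m ⧸ S), f = 0 := by
  letI : Module k m := Module.compHom m (algebraMap k Λ)
  letI : IsScalarTower k Λ m :=
    ⟨fun c r x => by rw [Algebra.smul_def, mul_smul]; rfl⟩
  haveI : Module.Finite k m := Module.Finite.trans Λ m
  exact aux hsimple hproj (Module.finrank k m) m le_rfl
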